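/- Let K be a closed (possibly unbounded) subset of R^N, Phi = {phi_1, ..., phi_n} continuous linearly independent functions on K tending to zero at infinity, f in C(K) tending to zero at infinity, and suppose r = inf_{p in span(Phi)} ||p - f||_{sup, K} > 0. Then there exists a compact subset B_1 of K such that every polynomial p in span(Phi) with ||p - f||_{sup, B_1} <= r satisfies ||p - f||_{sup, K} = ||p - f||_{sup, B_1}; in particular, the best approximation to f on K exists and coincides with the best approximation on B_1. -/

import Mathlib

open Filter Metric

private lemma tail_small {E : Type*} [NormedAddCommGroup E] (K : Set E) (g : E → ℝ)
    (h : Filter.Tendsto g (Filter.cocompact E ⊓ Filter.principal K) (nhds 0))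
    {ε : ℝ} (hε : 0 < ε) : ∃ R : ℝ, ∀ x ∈ K, R < ‖x‖ → |g x| ≤ ε := by
  have hev : ∀ᶠ x in Filter.cocompact E ⊓ Filter.principal K, |g x| < ε := by
    have := Metric.tendsto_nhds.mp h ε hε
    simpa [Real.dist_eq] using this
  rw [Filter.eventually_iff, Filter.mem_inf_iff_superset] at hev
  obtain ⟨t₁, ht₁, t₂, ht₂, hsub⟩ := hev
  rw [Filter.mem_cocompact] at ht₁
  obtain ⟨C, hC, hCsub⟩ := ht₁
  obtain ⟨R, hR⟩ := hC.isBounded.subset_closedBall 0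
  refine ⟨R, fun x hx hxR => ?_⟩
  have hxC : x ∉ C := by
    intro hxC
    have := hR hxC
    rw [Metric.mem_closedBall, dist_zero_right] at this
    linarith
  exact le_of_lt (hsub ⟨hCsub hxC, Filter.mem_principal.mp ht₂ hx⟩)

private lemma exists_stab (N n : ℕ) (K : Set (EuclideanSpace ℝ (Fin N)))
    (φ : Fin n → EuclideanSpace ℝ (Fin N) → ℝ)
    (hφind : LinearIndependent ℝ fun i => K.restrict (φ i)) :
    ∃ m₀ : ℕ, ∀ a : Fin n → ℝ,
      (∀ x ∈ K ∩ Metric.closedBall 0 (m₀ : ℝ), ∑ i, a i * φ i x = 0) → a = 0 := by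
  set W : ℕ → Submodule ℝ (Fin n → ℝ) := fun m =>
    { carrier := {a | ∀ x ∈ K ∩ Metric.closedBall 0 (m : ℝ), ∑ i, a i * φ i x = 0}
      add_mem' := fun {a b} ha hb x hx => by
        simp only [Set.mem_setOf_eq] at ha hb
        simp [Pi.add_apply, add_mul, Finset.sum_add_distrib, ha x hx, hb x hx]
      zero_mem' := by simp
      smul_mem' := fun c {a} ha x hx => by
        simp only [Set.mem_setOf_eq] at ha
        simp [Pi.smul_apply, smul_eq_mul, mul_assoc, ← Finset.mul_sum, ha x hx] } with hW
  have hanti : ∀ {m m' : ℕ}, m ≤ m' → W m' ≤ W m := by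
    intro m m' hmm a ha x hx
    exact ha x ⟨hx.1, Metric.closedBall_subset_closedBall (by exact_mod_cast hmm) hx.2⟩
  obtain ⟨m₀, hm₀⟩ : ∃ m₀, Module.finrank ℝ (W m₀)
      = sInf (Set.range fun m => Module.finrank ℝ (W m)) :=
    Nat.sInf_mem (Set.range_nonempty _)
  refine ⟨m₀, fun a ha => ?_⟩
  have haW : ∀ m, m₀ ≤ m → a ∈ W m := by
    intro m hm
    have heq : W m = W m₀ := Submodule.eq_of_le_of_finrank_le (hanti hm) (by
      rw [hm₀]; exact Nat.sInf_le ⟨m, rfl⟩)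
    rw [heq]; exact ha
  have hK0 : ∀ x ∈ K, ∑ i, a i * φ i x = 0 := by
    intro x hx
    have hm : x ∈ Metric.closedBall (0 : EuclideanSpace ℝ (Fin N)) ((max m₀ ⌈‖x‖⌉₊ : ℕ) : ℝ) := by
      rw [Metric.mem_closedBall, dist_zero_right]
      calc ‖x‖ ≤ (⌈‖x‖⌉₊ : ℝ) := Nat.le_ceil _
        _ ≤ _ := by exact_mod_cast Nat.le_max_right m₀ _
    exact haW _ (Nat.le_max_left _ _) x ⟨hx, hm⟩
  have hz := Fintype.linearIndependent_iff.mp hφind a (by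
    funext y
    simp only [Finset.sum_apply, Pi.smul_apply, Set.restrict_apply, smul_eq_mul, Pi.zero_apply]
    exact hK0 y y.2)
  funext i; exact hz i

theorem reduction_to_compact_set
    (N n : ℕ) (K : Set (EuclideanSpace ℝ (Fin N))) (hK : IsClosed K)
    (φ : Fin n → EuclideanSpace ℝ (Fin N) → ℝ)
    (hφcont : ∀ i, ContinuousOn (φ i) K)
    (hφzero : ∀ i, Filter.Tendsto (φ i)
      (Filter.cocompact (EuclideanSpace ℝ (Fin N)) ⊓ Filter.principal K) (nhds 0))
    (hφind : LinearIndependent ℝ fun i => K.restrict (φ i))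
    (f : EuclideanSpace ℝ (Fin N) → ℝ) (hfcont : ContinuousOn f K)
    (hfzero : Filter.Tendsto f
      (Filter.cocompact (EuclideanSpace ℝ (Fin N)) ⊓ Filter.principal K) (nhds 0))
    (r : ℝ) (hrpos : 0 < r)
    (hr : IsGLB {v : ℝ | ∃ p ∈ Submodule.span ℝ (Set.range φ),
        v = ⨆ x : K, |p x - f x|} r) :
    ∃ B₁ : Set (EuclideanSpace ℝ (Fin N)), B₁ ⊆ K ∧ IsCompact B₁ ∧
      ∀ p ∈ Submodule.span ℝ (Set.range φ),
        (⨆ x : B₁, |p x - f x|) ≤ r →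
          (⨆ x : K, |p x - f x|) = ⨆ x : B₁, |p x - f x| := by
  obtain ⟨m₀, hm₀⟩ := exists_stab N n K φ hφind
  set B₀ : Set (EuclideanSpace ℝ (Fin N)) := K ∩ Metric.closedBall 0 (m₀ : ℝ) with hB₀
  have hB₀K : B₀ ⊆ K := Set.inter_subset_left
  have hB₀c : IsCompact B₀ := (isCompact_closedBall _ _).inter_left hK
  haveI : CompactSpace ↥B₀ := isCompact_iff_compactSpace.mp hB₀c
  have hcont' : ∀ i, Continuous fun x : ↥B₀ => φ i ↑x := fun i =>
    (hφcont i).comp_continuous continuous_subtype_val fun x => hB₀K x.2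
  let T : (Fin n → ℝ) →ₗ[ℝ] C(↥B₀, ℝ) :=
    { toFun := fun a => ⟨fun x => ∑ i, a i * φ i ↑x,
        continuous_finset_sum _ fun i _ => continuous_const.mul (hcont' i)⟩
      map_add' := fun a b => by
        ext x; simp [add_mul, Finset.sum_add_distrib]
      map_smul' := fun c a => by
        ext x; simp [mul_assoc, ← Finset.mul_sum] }
  have hker : LinearMap.ker T = ⊥ := by
    rw [LinearMap.ker_eq_bot']
    intro a hTa
    apply hm₀ a
    intro x hx
    have h1 : (T a) ⟨x, hx⟩ = (0 : C(↥B₀, ℝ)) ⟨x, hx⟩ := by rw [hTa]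
    exact h1
  obtain ⟨c, hc0, hc⟩ := T.exists_antilipschitzWith hker
  have hnorm : ∀ a : Fin n → ℝ, ‖a‖ ≤ c * ‖T a‖ := by
    intro a
    have := hc.le_mul_dist a 0
    simpa [dist_zero_right, map_zero] using this
  -- bound of f on B₀
  obtain ⟨Cf, hCf⟩ := hB₀c.exists_bound_of_continuousOn (hfcont.mono hB₀K)
  set Cf' : ℝ := max Cf 0 with hCf'def
  have hCf'0 : 0 ≤ Cf' := le_max_right _ _
  have hCfB : ∀ x ∈ B₀, |f x| ≤ Cf' := fun x hx =>
    le_trans (hCf x hx) (le_max_left _ _)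
  set A : ℝ := ↑c * (r + Cf') with hAdef
  have hA0 : 0 ≤ A := mul_nonneg c.2 (by linarith)
  set D : ℝ := (n : ℝ) * A with hDdef
  have hD0 : 0 ≤ D := mul_nonneg (Nat.cast_nonneg n) hA0
  set ε : ℝ := r / (2 * (D + 1)) with hεdef
  have hε0 : 0 < ε := div_pos hrpos (by linarith)
  obtain ⟨Rf, hRf⟩ := tail_small K f hfzero (show (0:ℝ) < r/4 by linarith)
  have hRφ : ∀ i, ∃ R : ℝ, ∀ x ∈ K, R < ‖x‖ → |φ i x| ≤ ε := fun i =>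
    tail_small K (φ i) (hφzero i) hε0
  choose Rφ hRφ' using hRφ
  obtain ⟨RB, hRB⟩ := (Set.finite_range Rφ).bddAbove
  set M : ℝ := max (m₀ : ℝ) (max Rf RB) with hMdef
  set B₁ : Set (EuclideanSpace ℝ (Fin N)) := K ∩ Metric.closedBall 0 M with hB₁def
  have hB₁K : B₁ ⊆ K := Set.inter_subset_left
  have hB₁c : IsCompact B₁ := (isCompact_closedBall _ _).inter_left hK
  have hB₀B₁ : B₀ ⊆ B₁ := fun x hx =>
    ⟨hx.1, Metric.closedBall_subset_closedBall (le_max_left _ _) hx.2⟩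
  refine ⟨B₁, hB₁K, hB₁c, ?_⟩
  intro p hp hpB₁
  obtain ⟨a, ha⟩ := (Submodule.mem_span_range_iff_exists_fun ℝ).mp hp
  have hpx : ∀ x, p x = ∑ i, a i * φ i x := by
    intro x
    rw [← ha]
    simp [Finset.sum_apply]
  have hpcont : ContinuousOn p K := by
    have h1 : ContinuousOn (fun x => ∑ i, a i * φ i x) K :=
      continuousOn_finset_sum _ fun i _ => continuousOn_const.mul (hφcont i)
    exact h1.congr fun x _ => hpx x
  -- bound of |p - f| on B₁
  obtain ⟨Cb, hCb⟩ := hB₁c.exists_bound_of_continuousOn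
    ((hpcont.sub hfcont).mono hB₁K)
  have hCbB : ∀ x ∈ B₁, |p x - f x| ≤ Cb := fun x hx => hCb x hx
  set S₁ : ℝ := ⨆ x : ↥B₁, |p ↑x - f ↑x| with hS₁def
  have hbddB₁ : BddAbove (Set.range fun x : ↥B₁ => |p ↑x - f ↑x|) := by
    refine ⟨Cb, ?_⟩
    rintro v ⟨x, rfl⟩
    exact hCbB x x.2
  have hS₁le : ∀ x ∈ B₁, |p x - f x| ≤ S₁ := fun x hx =>
    le_ciSup hbddB₁ (⟨x, hx⟩ : ↥B₁)
  -- coefficient bound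
  have hTa : ‖T a‖ ≤ r + Cf' := by
    rw [ContinuousMap.norm_le _ (by linarith)]
    intro x
    have h1 : (T a) x = p ↑x := (hpx ↑x).symm
    rw [h1]
    have h2 : |p ↑x - f ↑x| ≤ r := le_trans (hS₁le _ (hB₀B₁ x.2)) hpB₁
    have h3 : |f ↑x| ≤ Cf' := hCfB _ x.2
    calc ‖p ↑x‖ = |p ↑x| := rfl
      _ ≤ |p ↑x - f ↑x| + |f ↑x| := by
          have := abs_sub_abs_le_abs_sub (p ↑x) (f ↑x)
          have := abs_add_le (p ↑x - f ↑x) (f ↑x)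
          calc |p ↑x| = |(p ↑x - f ↑x) + f ↑x| := by ring_nf
            _ ≤ |p ↑x - f ↑x| + |f ↑x| := abs_add_le _ _
      _ ≤ r + Cf' := add_le_add h2 h3
  have hanorm : ‖a‖ ≤ A := le_trans (hnorm a) (by
    rw [hAdef]
    exact mul_le_mul_of_nonneg_left hTa c.2)
  have hai : ∀ i, |a i| ≤ A := fun i => le_trans (norm_le_pi_norm a i) hanorm
  -- tail bound
  have htail : ∀ x ∈ K, x ∉ B₁ → |p x - f x| ≤ 3/4 * r := by
    intro x hx hxB
    have hxM : M < ‖x‖ := by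
      by_contra h
      push_neg at h
      exact hxB ⟨hx, by rwa [Metric.mem_closedBall, dist_zero_right]⟩
    have hfx : |f x| ≤ r/4 := hRf x hx (lt_of_le_of_lt (le_trans (le_max_left _ _) (le_max_right _ _)) hxM)
    have hφx : ∀ i, |φ i x| ≤ ε := fun i =>
      hRφ' i x hx (lt_of_le_of_lt (le_trans (hRB ⟨i, rfl⟩) (le_trans (le_max_right _ _) (le_max_right _ _))) hxM)
    have hpxb : |p x| ≤ D * ε := by
      rw [hpx x]
      calc |∑ i, a i * φ i x| ≤ ∑ i, |a i * φ i x| := Finset.abs_sum_le_sum_abs _ _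
        _ ≤ ∑ _i : Fin n, A * ε := by
            apply Finset.sum_le_sum
            intro i _
            rw [abs_mul]
            exact mul_le_mul (hai i) (hφx i) (abs_nonneg _) hA0
        _ = D * ε := by simp [hDdef]; ring
    have hDε : D * ε ≤ r / 2 := by
      rw [hεdef, mul_div_assoc',
        div_le_div_iff₀ (by linarith : (0:ℝ) < 2*(D+1)) (by norm_num : (0:ℝ) < 2)]
      nlinarith [hrpos, hD0]
    calc |p x - f x| ≤ |p x| + |f x| := abs_sub _ _
      _ ≤ D * ε + r/4 := add_le_add hpxb hfx
      _ ≤ r/2 + r/4 := by linarith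
      _ ≤ 3/4 * r := by linarith
  set SK : ℝ := ⨆ x : ↥K, |p ↑x - f ↑x| with hSKdef
  have hrSK : r ≤ SK := hr.1 ⟨p, hp, rfl⟩
  have hbddK : BddAbove (Set.range fun x : ↥K => |p ↑x - f ↑x|) := by
    refine ⟨max Cb (3/4*r), ?_⟩
    rintro v ⟨x, rfl⟩
    by_cases hxB : (x : EuclideanSpace ℝ (Fin N)) ∈ B₁
    · exact le_trans (hCbB x hxB) (le_max_left _ _)
    · exact le_trans (htail x x.2 hxB) (le_max_right _ _)
  have hSKle : SK ≤ max S₁ (3/4*r) := by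
    apply Real.iSup_le
    · intro x
      by_cases hxB : (x : EuclideanSpace ℝ (Fin N)) ∈ B₁
      · exact le_trans (hS₁le x hxB) (le_max_left _ _)
      · exact le_trans (htail x x.2 hxB) (le_max_right _ _)
    · exact le_max_of_le_right (by linarith)
  have hS₁SK : S₁ ≤ SK := by
    apply Real.iSup_le
    · intro x
      exact le_ciSup hbddK (⟨↑x, hB₁K x.2⟩ : ↥K)
    · linarith
  rcases le_total (3/4*r) S₁ with h34 | h34
  · rw [max_eq_left h34] at hSKle
    exact le_antisymm hSKle hS₁SK
  · rw [max_eq_right h34] at hSKle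
    linarith
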